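/- Quasi-optimality of the KL-optimal profile: for any 0 < α ≤ 1 and any feature map φ_r, the measures π_{α,r}^opt (with profile (E_μ[ℓ^α|φ_r])^{1/α}) and π_{1,r}^opt (with profile E_μ[ℓ|φ_r]) satisfy D_α(π ‖ π_{α,r}^opt) ≤ D_α(π ‖ π_{1,r}^opt) ≤ (1/α) D_α(π ‖ π_{α,r}^opt). -/

import Mathlib

open MeasureTheory

/-- The Amari α-divergence between measures given by normalized densities `p, q`
with respect to `μ`, with the KL divergence recovered at `α = 1`. -/
noncomputable def amariDiv {X : Type*} [MeasurableSpace X] (μ : Measure X)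
    (α : ℝ) (p q : X → ℝ) : ℝ :=
  if α = 1 then ∫ x, Real.log (p x / q x) * p x ∂μ
  else (1 / (α * (α - 1))) * ((∫ x, (p x / q x) ^ α * q x ∂μ) - 1)

open Filter in
/-- Quasi-optimality of the KL-optimal profile: for `0 < α ≤ 1`,
`D_α(π‖π_{α,r}^opt) ≤ D_α(π‖π_{1,r}^opt) ≤ (1/α) D_α(π‖π_{α,r}^opt)`. -/
theorem KL_profile_quasi_optimal
    {d r : ℕ} (μ : Measure (Fin d → ℝ)) [IsProbabilityMeasure μ]
    (ℓ : (Fin d → ℝ) → ℝ) (φr : (Fin d → ℝ) → (Fin r → ℝ)) (hφ : Measurable φr)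
    (hℓ_int : Integrable ℓ μ) (hℓ_pos : ∀ x, 0 < ℓ x)
    (α : ℝ) (hα : α ∈ Set.Ioc (0:ℝ) 1)
    (Zπ : ℝ) (hZπ : Zπ = ∫ x, ℓ x ∂μ) (hZπ_pos : 0 < Zπ)
    (m : MeasurableSpace (Fin d → ℝ))
    (hm : m = MeasurableSpace.comap φr inferInstance)
    (Lα : (Fin d → ℝ) → ℝ)
    (hLα : Lα = fun x => (condExp m μ (fun y => ℓ y ^ α) x) ^ (1/α))
    (L1 : (Fin d → ℝ) → ℝ) (hL1 : L1 = condExp m μ ℓ)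
    (Zα : ℝ) (hZα : Zα = ∫ x, Lα x ∂μ) (hZα_pos : 0 < Zα)
    (Z1 : ℝ) (hZ1 : Z1 = ∫ x, L1 x ∂μ) (hZ1_pos : 0 < Z1) :
    @amariDiv (Fin d → ℝ) MeasurableSpace.pi μ α (fun x => ℓ x / Zπ) (fun x => Lα x / Zα)
        ≤ @amariDiv (Fin d → ℝ) MeasurableSpace.pi μ α (fun x => ℓ x / Zπ) (fun x => L1 x / Z1) ∧
    @amariDiv (Fin d → ℝ) MeasurableSpace.pi μ α (fun x => ℓ x / Zπ) (fun x => L1 x / Z1)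
        ≤ (1 / α) * @amariDiv (Fin d → ℝ) MeasurableSpace.pi μ α (fun x => ℓ x / Zπ) (fun x => Lα x / Zα) := by
  obtain ⟨hα0, hα1⟩ := hα
  by_cases hαeq : α = 1
  · -- trivial case α = 1 : the two profiles coincide
    subst hαeq
    have hfun : (fun y => ℓ y ^ (1:ℝ)) = ℓ := funext fun y => Real.rpow_one _
    have hLαL1 : Lα = L1 := by
      rw [hLα, hL1, hfun]
      funext x
      norm_num
    have hZ : Zα = Z1 := by rw [hZα, hZ1, hLαL1]
    rw [hLαL1, hZ]
    norm_num
  have hαlt : α < 1 := lt_of_le_of_ne hα1 hαeq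
  have h1α_pos : (0:ℝ) < 1 - α := by linarith
  have hm_le : m ≤ (MeasurableSpace.pi : MeasurableSpace (Fin d → ℝ)) := by
    rw [hm]; exact hφ.comap_le
  haveI : SigmaFinite (μ.trim hm_le) := inferInstance
  letI : MeasurableSpace (Fin d → ℝ) := MeasurableSpace.pi
  set g : (Fin d → ℝ) → ℝ := condExp m μ (fun y => ℓ y ^ α) with hg_def
  -- basic facts
  have hZ1Zπ : Z1 = Zπ := by
    rw [hZ1, hZπ, hL1]
    exact integral_condExp hm_le
  have hℓα_meas : AEStronglyMeasurable (fun x => ℓ x ^ α) μ :=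
    (hℓ_int.1.aemeasurable.pow_const α).aestronglyMeasurable
  have hℓα_int : Integrable (fun x => ℓ x ^ α) μ := by
    refine (hℓ_int.add (integrable_const 1)).mono' hℓα_meas ?_
    filter_upwards with x
    have hx := hℓ_pos x
    rw [Real.norm_eq_abs, abs_of_nonneg (Real.rpow_nonneg hx.le α)]
    rcases le_or_gt (ℓ x) 1 with h | h
    · have := Real.rpow_le_one hx.le h hα0.le
      simp only [Pi.add_apply]
      linarith
    · have h2 : ℓ x ^ α ≤ ℓ x ^ (1:ℝ) := Real.rpow_le_rpow_of_exponent_le h.le hα1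
      rw [Real.rpow_one] at h2
      simp only [Pi.add_apply]
      linarith
  have hg_int : Integrable g μ := integrable_condExp
  have hg_meas : StronglyMeasurable[m] g := stronglyMeasurable_condExp
  have hg_nonneg : 0 ≤ᵐ[μ] g :=
    condExp_nonneg (ae_of_all _ fun x => Real.rpow_nonneg (hℓ_pos x).le α)
  have hL1_meas : StronglyMeasurable[m] L1 := by rw [hL1]; exact stronglyMeasurable_condExp
  have hL1_int : Integrable L1 μ := by rw [hL1]; exact integrable_condExp
  -- positivity of L1 a.e.
  have hL1_pos : ∀ᵐ x ∂μ, 0 < L1 x := by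
    rw [ae_iff]
    simp only [not_lt]
    set A : Set (Fin d → ℝ) := {x | L1 x ≤ 0} with hA_def
    have hA_m : MeasurableSet[m] A := measurableSet_le hL1_meas.measurable measurable_const
    have hA : MeasurableSet[MeasurableSpace.pi] A := hm_le _ hA_m
    by_contra hμA
    have hμA_pos : 0 < μ A := (pos_iff_ne_zero (a := μ A)).2 hμA
    have h1 : ∫ x in A, L1 x ∂μ = ∫ x in A, ℓ x ∂μ := by
      rw [hL1]; exact setIntegral_condExp hm_le hℓ_int hA_m
    have h2 : ∫ x in A, L1 x ∂μ ≤ 0 := by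
      apply integral_nonpos_of_ae
      exact (ae_restrict_iff' (μ := μ) hA).2 (ae_of_all _ fun x hx => hx)
    have h3 : 0 < ∫ x in A, ℓ x ∂μ := by
      rw [setIntegral_pos_iff_support_of_nonneg_ae (ae_of_all _ fun x => (hℓ_pos x).le)
        hℓ_int.integrableOn]
      have hsupp : Function.support ℓ = Set.univ :=
        Set.eq_univ_of_forall fun x => (hℓ_pos x).ne'
      rw [hsupp, Set.univ_inter]
      exact hμA_pos
    linarith [h1 ▸ h2]
  -- conditional Jensen via rational approximation
  have hqbound : ∀ q : ℚ, ∀ᵐ x ∂μ,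
      0 < (q:ℝ) → g x ≤ α * (q:ℝ)^(α-1) * L1 x + (1-α) * (q:ℝ)^α := by
    intro q
    rcases le_or_gt (q:ℝ) 0 with hq | hq
    · filter_upwards with x h
      exact absurd h (not_lt.2 hq)
    · have hpt : ∀ x, ℓ x ^ α ≤ α * (q:ℝ)^(α-1) * ℓ x + (1-α) * (q:ℝ)^α := by
        intro x
        have hAM : ℓ x ^ α * (q:ℝ) ^ (1-α) ≤ α * ℓ x + (1-α) * q :=
          Real.geom_mean_le_arith_mean2_weighted hα0.le (by linarith) (hℓ_pos x).le hq.le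
            (by ring)
        have hq1 : (q:ℝ)^(1-α) * (q:ℝ)^(α-1) = 1 := by
          rw [← Real.rpow_add hq]; norm_num
        have hqα : (q:ℝ)^(α-1) * (q:ℝ) = (q:ℝ)^α := by
          calc (q:ℝ)^(α-1) * (q:ℝ) = (q:ℝ)^(α-1) * (q:ℝ)^(1:ℝ) := by rw [Real.rpow_one]
            _ = (q:ℝ)^(α-1+1) := (Real.rpow_add hq _ _).symm
            _ = (q:ℝ)^α := by norm_num
        calc ℓ x ^ α = (ℓ x ^ α * (q:ℝ)^(1-α)) * (q:ℝ)^(α-1) := by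
              rw [mul_assoc, hq1, mul_one]
          _ ≤ (α * ℓ x + (1-α) * q) * (q:ℝ)^(α-1) :=
              mul_le_mul_of_nonneg_right hAM (Real.rpow_nonneg hq.le _)
          _ = α * (q:ℝ)^(α-1) * ℓ x + (1-α) * ((q:ℝ)^(α-1) * q) := by ring
          _ = _ := by rw [hqα]
      have hrhs_int : Integrable (fun x => α * (q:ℝ)^(α-1) * ℓ x + (1-α) * (q:ℝ)^α) μ :=
        (hℓ_int.const_mul _).add (integrable_const _)
      have hmono := condExp_mono (m := m) hℓα_int hrhs_int (ae_of_all _ hpt)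
      have hce : μ[(fun x => α * (q:ℝ)^(α-1) * ℓ x + (1-α) * (q:ℝ)^α)|m]
          =ᵐ[μ] fun x => α * (q:ℝ)^(α-1) * L1 x + (1-α) * (q:ℝ)^α := by
        have hsplit : (fun x => α * (q:ℝ)^(α-1) * ℓ x + (1-α) * (q:ℝ)^α)
            = (α * (q:ℝ)^(α-1)) • ℓ + (fun _ => (1-α) * (q:ℝ)^α) := rfl
        rw [hsplit]
        have h1 := condExp_add (μ := μ) (m := m)
          (hℓ_int.smul (α * (q:ℝ)^(α-1))) (integrable_const ((1-α) * (q:ℝ)^α))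
        have h2 := condExp_smul (μ := μ) (m := m) (α * (q:ℝ)^(α-1)) ℓ
        have h3 := condExp_const (μ := μ) hm_le ((1-α) * (q:ℝ)^α)
        filter_upwards [h1, h2] with x hx1 hx2
        simp only [Pi.add_apply, Pi.smul_apply, smul_eq_mul] at hx1 hx2 ⊢
        rw [hx1, hx2, congrFun h3 x, ← hL1]
      filter_upwards [hmono, hce] with x h1 h2 _
      calc g x ≤ (μ[(fun x => α * (q:ℝ)^(α-1) * ℓ x + (1-α) * (q:ℝ)^α)|m]) x := h1
        _ = _ := h2
  have hq_all : ∀ᵐ x ∂μ, ∀ q : ℚ,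
      0 < (q:ℝ) → g x ≤ α * (q:ℝ)^(α-1) * L1 x + (1-α) * (q:ℝ)^α := ae_all_iff.mpr hqbound
  have hJg : ∀ᵐ x ∂μ, g x ≤ L1 x ^ α := by
    filter_upwards [hq_all, hL1_pos] with x hx hL1x
    set t := L1 x with ht_def
    have hseq : ∀ n : ℕ, ∃ q : ℚ, t < (q:ℝ) ∧ (q:ℝ) < t + 1/((n:ℝ)+1) := by
      intro n
      have : t < t + 1/((n:ℝ)+1) := by
        have h : (0:ℝ) < 1/((n:ℝ)+1) := by positivity
        linarith
      exact exists_rat_btwn this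
    choose q hq1 hq2 using hseq
    have hq_tendsto : Tendsto (fun n : ℕ => (q n : ℝ)) atTop (nhds t) := by
      have h0 : Tendsto (fun n : ℕ => t + 1/((n:ℝ)+1)) atTop (nhds (t + 0)) :=
        tendsto_const_nhds.add tendsto_one_div_add_atTop_nhds_zero_nat
      rw [add_zero] at h0
      exact tendsto_of_tendsto_of_tendsto_of_le_of_le tendsto_const_nhds h0
        (fun n => (hq1 n).le) (fun n => (hq2 n).le)
    have c1 : ContinuousAt (fun s : ℝ => s ^ (α-1)) t :=
      Real.continuousAt_rpow_const t _ (Or.inl hL1x.ne')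
    have c2 : ContinuousAt (fun s : ℝ => s ^ α) t :=
      Real.continuousAt_rpow_const t _ (Or.inl hL1x.ne')
    have hF : Tendsto (fun n : ℕ => α * (q n:ℝ)^(α-1) * t + (1-α) * (q n:ℝ)^α) atTop
        (nhds (α * t^(α-1) * t + (1-α) * t^α)) :=
      ((((c1.tendsto.comp hq_tendsto).const_mul α).mul_const t).add
        ((c2.tendsto.comp hq_tendsto).const_mul (1-α)))
    have hle : g x ≤ α * t^(α-1) * t + (1-α) * t^α := by
      refine ge_of_tendsto hF (Eventually.of_forall fun n => ?_)
      exact hx (q n) (lt_trans hL1x (hq1 n))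
    have ht : α * t^(α-1) * t + (1-α) * t^α = t^α := by
      have h : t^(α-1) * t = t^α := by
        calc t^(α-1) * t = t^(α-1) * t^(1:ℝ) := by rw [Real.rpow_one]
          _ = t^(α-1+1) := (Real.rpow_add hL1x _ _).symm
          _ = t^α := by norm_num
      rw [mul_assoc, h]; ring
    linarith [ht ▸ hle]
  have hJ : ∀ᵐ x ∂μ, Lα x ≤ L1 x := by
    filter_upwards [hJg, hL1_pos, hg_nonneg] with x hx hL1x hgx
    replace hgx : (0:ℝ) ≤ g x := hgx
    simp only [hLα]
    calc g x ^ (1/α) ≤ (L1 x ^ α) ^ (1/α) := Real.rpow_le_rpow hgx hx (by positivity)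
      _ = L1 x := by
        rw [← Real.rpow_mul hL1x.le, mul_one_div, div_self hα0.ne', Real.rpow_one]
  have hLα_nonneg : ∀ᵐ x ∂μ, 0 ≤ Lα x := by
    filter_upwards [hg_nonneg] with x hx
    replace hx : (0:ℝ) ≤ g x := hx
    simp only [hLα]
    exact Real.rpow_nonneg hx _
  have hLα_meas_m : StronglyMeasurable[m] Lα := by
    rw [hLα]
    exact (hg_meas.measurable.pow_const (1/α)).stronglyMeasurable
  have hLα_meas : AEStronglyMeasurable Lα μ :=
    (hLα_meas_m.mono hm_le).aestronglyMeasurable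
  have hLα_int : Integrable Lα μ := by
    refine hL1_int.mono' hLα_meas ?_
    filter_upwards [hJ, hLα_nonneg] with x h1 h2
    rw [Real.norm_eq_abs, abs_of_nonneg h2]
    exact h1
  -- tower property
  have tower : ∀ h : (Fin d → ℝ) → ℝ, StronglyMeasurable[m] h →
      Integrable (fun x => h x * ℓ x ^ α) μ →
      ∫ x, h x * ℓ x ^ α ∂μ = ∫ x, h x * g x ∂μ := by
    intro h hh hint
    have h1 : μ[h * fun x => ℓ x ^ α|m] =ᵐ[μ] h * μ[fun x => ℓ x ^ α|m] :=
      condExp_mul_of_stronglyMeasurable_left hh hint hℓα_int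
    have h2 : ∫ x, (μ[h * fun x => ℓ x ^ α|m]) x ∂μ = ∫ x, (h * fun x => ℓ x ^ α) x ∂μ :=
      integral_condExp hm_le
    have h3 := integral_congr_ae h1
    simp only [Pi.mul_apply] at h2 h3
    rw [← h2, h3]
  set B : ℝ := ∫ x, L1 x ^ (1-α) * ℓ x ^ α ∂μ with hB_def
  -- integrability of the products
  have hprod_int : ∀ L : (Fin d → ℝ) → ℝ, Integrable L μ → (∀ᵐ x ∂μ, 0 ≤ L x) →
      AEStronglyMeasurable (fun x => L x ^ (1-α)) μ →
      Integrable (fun x => L x ^ (1-α) * ℓ x ^ α) μ := by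
    intro L hLint hLnn hLm
    refine ((hℓ_int.const_mul α).add (hLint.const_mul (1-α))).mono'
      (hLm.mul hℓα_meas) ?_
    filter_upwards [hLnn] with x hx
    have hAM : ℓ x ^ α * L x ^ (1-α) ≤ α * ℓ x + (1-α) * L x :=
      Real.geom_mean_le_arith_mean2_weighted hα0.le h1α_pos.le (hℓ_pos x).le hx (by ring)
    rw [Real.norm_eq_abs, abs_of_nonneg (mul_nonneg (Real.rpow_nonneg hx _)
      (Real.rpow_nonneg (hℓ_pos x).le _))]
    calc L x ^ (1-α) * ℓ x ^ α = ℓ x ^ α * L x ^ (1-α) := by ring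
      _ ≤ α * ℓ x + (1-α) * L x := hAM
  have hL1pow_meas : AEStronglyMeasurable (fun x => L1 x ^ (1-α)) μ :=
    ((hL1_meas.mono hm_le).measurable.pow_const (1-α)).aestronglyMeasurable
  have hLαpow_meas : AEStronglyMeasurable (fun x => Lα x ^ (1-α)) μ :=
    ((hLα_meas_m.mono hm_le).measurable.pow_const (1-α)).aestronglyMeasurable
  have hL1prod_int : Integrable (fun x => L1 x ^ (1-α) * ℓ x ^ α) μ :=
    hprod_int L1 hL1_int (hL1_pos.mono fun x h => h.le) hL1pow_meas
  have hLαprod_int : Integrable (fun x => Lα x ^ (1-α) * ℓ x ^ α) μ :=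
    hprod_int Lα hLα_int hLα_nonneg hLαpow_meas
  -- ∫ Lα^{1-α} g = Zα
  have hgLα : ∫ x, Lα x ^ (1-α) * g x ∂μ = Zα := by
    rw [hZα]
    apply integral_congr_ae
    filter_upwards [hg_nonneg] with x hx
    replace hx : (0:ℝ) ≤ g x := hx
    simp only [hLα]
    rcases eq_or_lt_of_le hx with h0 | hpos
    · rw [← h0, Real.zero_rpow (one_div_ne_zero hα0.ne')]
      simp
    · rw [← Real.rpow_mul hx]
      calc g x ^ (1/α*(1-α)) * g x = g x ^ (1/α*(1-α)) * g x ^ (1:ℝ) := by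
            rw [Real.rpow_one]
        _ = g x ^ (1/α*(1-α)+1) := (Real.rpow_add hpos _ _).symm
        _ = g x ^ (1/α) := by
            congr 1
            field_simp <;> ring
  have hCα : ∫ x, Lα x ^ (1-α) * ℓ x ^ α ∂μ = Zα := by
    rw [tower _ ((hLα_meas_m.measurable.pow_const (1-α)).stronglyMeasurable) hLαprod_int, hgLα]
  have hBtower : B = ∫ x, L1 x ^ (1-α) * g x ∂μ := by
    rw [hB_def, tower _ ((hL1_meas.measurable.pow_const (1-α)).stronglyMeasurable) hL1prod_int]
  -- g = Lα ^ α a.e.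
  have hgLαα : ∀ᵐ x ∂μ, g x = Lα x ^ α := by
    filter_upwards [hg_nonneg] with x hx
    replace hx : (0:ℝ) ≤ g x := hx
    simp only [hLα]
    rw [← Real.rpow_mul hx, one_div, inv_mul_cancel₀ hα0.ne', Real.rpow_one]
  -- B ≥ Zα
  have hB_ge : Zα ≤ B := by
    rw [← hCα, hB_def]
    apply integral_mono_ae hLαprod_int hL1prod_int
    filter_upwards [hJ, hLα_nonneg] with x h1 h2
    exact mul_le_mul_of_nonneg_right (Real.rpow_le_rpow h2 h1 h1α_pos.le)
      (Real.rpow_nonneg (hℓ_pos x).le _)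
  -- B ≤ Zα^α * Zπ^{1-α}  (Hölder via pointwise AM-GM)
  have hB_le : B ≤ Zα ^ α * Zπ ^ (1-α) := by
    rw [hBtower]
    have hbound_int : Integrable
        (fun x => Zα ^ α * Zπ ^ (1-α) * (α / Zα * Lα x + (1-α) / Zπ * L1 x)) μ :=
      (((hLα_int.const_mul _).add (hL1_int.const_mul _)).const_mul _)
    have hmono := integral_mono_of_nonneg (f := fun x => L1 x ^ (1-α) * g x)
      (g := fun x => Zα ^ α * Zπ ^ (1-α) * (α / Zα * Lα x + (1-α) / Zπ * L1 x))
      ?_ hbound_int ?_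
    · calc ∫ x, L1 x ^ (1-α) * g x ∂μ
          ≤ ∫ x, Zα ^ α * Zπ ^ (1-α) * (α / Zα * Lα x + (1-α) / Zπ * L1 x) ∂μ := hmono
        _ = Zα ^ α * Zπ ^ (1-α) *
            (α / Zα * ∫ x, Lα x ∂μ + (1-α) / Zπ * ∫ x, L1 x ∂μ) := by
            rw [integral_const_mul, integral_add (hLα_int.const_mul _) (hL1_int.const_mul _),
              integral_const_mul, integral_const_mul]
        _ = Zα ^ α * Zπ ^ (1-α) := by
            rw [← hZα, ← hZ1, hZ1Zπ]
            field_simp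
            ring
    · filter_upwards [hg_nonneg, hL1_pos] with x h1 h2
      replace h1 : (0:ℝ) ≤ g x := h1
      exact mul_nonneg (Real.rpow_nonneg h2.le _) h1
    · filter_upwards [hgLαα, hLα_nonneg, hL1_pos] with x hgx h1 h2
      rw [hgx]
      have hAM : (Lα x / Zα) ^ α * (L1 x / Zπ) ^ (1-α)
          ≤ α * (Lα x / Zα) + (1-α) * (L1 x / Zπ) :=
        Real.geom_mean_le_arith_mean2_weighted hα0.le h1α_pos.le
          (div_nonneg h1 hZα_pos.le) (div_nonneg h2.le hZπ_pos.le) (by ring)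
      have hLαZ : Lα x = Zα * (Lα x / Zα) := by field_simp
      have hL1Z : L1 x = Zπ * (L1 x / Zπ) := by field_simp
      calc L1 x ^ (1-α) * Lα x ^ α = Lα x ^ α * L1 x ^ (1-α) := by ring
        _ = (Zα * (Lα x / Zα)) ^ α * (Zπ * (L1 x / Zπ)) ^ (1-α) := by
            rw [← hLαZ, ← hL1Z]
        _ = Zα ^ α * (Lα x / Zα) ^ α * (Zπ ^ (1-α) * (L1 x / Zπ) ^ (1-α)) := by
            rw [Real.mul_rpow hZα_pos.le (div_nonneg h1 hZα_pos.le),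
              Real.mul_rpow hZπ_pos.le (div_nonneg h2.le hZπ_pos.le)]
        _ = Zα ^ α * Zπ ^ (1-α) * ((Lα x / Zα) ^ α * (L1 x / Zπ) ^ (1-α)) := by ring
        _ ≤ Zα ^ α * Zπ ^ (1-α) * (α * (Lα x / Zα) + (1-α) * (L1 x / Zπ)) := by
            apply mul_le_mul_of_nonneg_left hAM
            positivity
        _ = Zα ^ α * Zπ ^ (1-α) * (α / Zα * Lα x + (1-α) / Zπ * L1 x) := by
            ring
  -- pointwise simplification of the divergence integrands
  have hint_eq : ∀ (lx L Z : ℝ), 0 < lx → 0 ≤ L → 0 < Z →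
      (lx / Zπ / (L / Z)) ^ α * (L / Z) = Z ^ (α-1) / Zπ ^ α * (L ^ (1-α) * lx ^ α) := by
    intro lx L Z hl hL hZ
    rcases eq_or_lt_of_le hL with h0 | hLpos
    · rw [← h0]
      rw [zero_div, div_zero, Real.zero_rpow hα0.ne', Real.zero_rpow h1α_pos.ne']
      ring
    · have hb : (0:ℝ) < L / Z := div_pos hLpos hZ
      have ha : (0:ℝ) < lx / Zπ := div_pos hl hZπ_pos
      rw [Real.div_rpow ha.le hb.le, Real.div_rpow hl.le hZπ_pos.le,
        Real.div_rpow hLpos.le hZ.le]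
      have e1 : L ^ (1-α) = L / L ^ α := by
        rw [Real.rpow_sub hLpos, Real.rpow_one]
      have e2 : Z ^ (α-1) = Z ^ α / Z := by
        rw [Real.rpow_sub hZ, Real.rpow_one]
      rw [e1, e2]
      have hLα' : L ^ α ≠ 0 := (Real.rpow_pos_of_pos hLpos α).ne'
      have hZα' : Z ^ α ≠ 0 := (Real.rpow_pos_of_pos hZ α).ne'
      have hZπα' : Zπ ^ α ≠ 0 := (Real.rpow_pos_of_pos hZπ_pos α).ne'
      have hZ' : Z ≠ 0 := hZ.ne'
      have hZπ' : Zπ ≠ 0 := hZπ_pos.ne'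
      field_simp
  -- compute the two integrals
  have hIA : ∫ x, (ℓ x / Zπ / (Lα x / Zα)) ^ α * (Lα x / Zα) ∂μ = Zα ^ α / Zπ ^ α := by
    have hcongr : ∫ x, (ℓ x / Zπ / (Lα x / Zα)) ^ α * (Lα x / Zα) ∂μ
        = ∫ x, Zα ^ (α-1) / Zπ ^ α * (Lα x ^ (1-α) * ℓ x ^ α) ∂μ := by
      apply integral_congr_ae
      filter_upwards [hLα_nonneg] with x hx
      exact hint_eq (ℓ x) (Lα x) Zα (hℓ_pos x) hx hZα_pos
    rw [hcongr, integral_const_mul, hCα, div_mul_eq_mul_div]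
    congr 1
    calc Zα ^ (α-1) * Zα = Zα ^ (α-1) * Zα ^ (1:ℝ) := by rw [Real.rpow_one]
      _ = Zα ^ (α-1+1) := (Real.rpow_add hZα_pos _ _).symm
      _ = Zα ^ α := by norm_num
  have hIB : ∫ x, (ℓ x / Zπ / (L1 x / Z1)) ^ α * (L1 x / Z1) ∂μ = B / Zπ := by
    have hcongr : ∫ x, (ℓ x / Zπ / (L1 x / Z1)) ^ α * (L1 x / Z1) ∂μ
        = ∫ x, Z1 ^ (α-1) / Zπ ^ α * (L1 x ^ (1-α) * ℓ x ^ α) ∂μ := by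
      apply integral_congr_ae
      filter_upwards [hL1_pos] with x hx
      exact hint_eq (ℓ x) (L1 x) Z1 (hℓ_pos x) hx.le hZ1_pos
    rw [hcongr, integral_const_mul, ← hB_def, hZ1Zπ]
    have h : Zπ ^ (α-1) / Zπ ^ α = 1 / Zπ := by
      rw [← Real.rpow_sub hZπ_pos]
      have : α - 1 - α = -1 := by ring
      rw [this, Real.rpow_neg_one, one_div]
    rw [h]
    rw [one_div, inv_mul_eq_div]
  -- assemble
  simp only [amariDiv, if_neg hαeq]
  rw [hIA, hIB]
  have hc : 1/(α*(α-1)) < 0 := one_div_neg.mpr (mul_neg_of_pos_of_neg hα0 (by linarith))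
  have hkey1 : B / Zπ ≤ Zα^α / Zπ^α := by
    rw [div_le_div_iff₀ hZπ_pos (Real.rpow_pos_of_pos hZπ_pos α)]
    calc B * Zπ^α ≤ (Zα^α * Zπ^(1-α)) * Zπ^α :=
          mul_le_mul_of_nonneg_right hB_le (Real.rpow_nonneg hZπ_pos.le α)
      _ = Zα^α * Zπ := by
          rw [mul_assoc, ← Real.rpow_add hZπ_pos, sub_add_cancel, Real.rpow_one]
  have hkey2 : Zα^α/Zπ^α ≤ α * (B/Zπ) + 1 - α := by
    have h1 : Zα^α/Zπ^α = (Zα/Zπ)^α := (Real.div_rpow hZα_pos.le hZπ_pos.le α).symm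
    have h2 : (Zα/Zπ)^α * (1:ℝ)^(1-α) ≤ α * (Zα/Zπ) + (1-α)*1 :=
      Real.geom_mean_le_arith_mean2_weighted hα0.le h1α_pos.le
        (div_nonneg hZα_pos.le hZπ_pos.le) zero_le_one (by ring)
    rw [Real.one_rpow, mul_one, mul_one] at h2
    have h3 : α * (Zα/Zπ) ≤ α * (B/Zπ) := by gcongr
    rw [h1]
    linarith
  constructor
  · exact mul_le_mul_of_nonpos_left (by linarith) hc.le
  · have h4 : Zα^α/Zπ^α - 1 ≤ α * (B/Zπ - 1) := by
      have he : α * (B/Zπ - 1) = α * (B/Zπ) - α := by ring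
      linarith [hkey2]
    have h5 : 1/(α*(α-1)) * (α * (B/Zπ - 1)) ≤ 1/(α*(α-1)) * (Zα^α/Zπ^α - 1) :=
      mul_le_mul_of_nonpos_left h4 hc.le
    have h6 := mul_le_mul_of_nonneg_left h5 (le_of_lt (by positivity : (0:ℝ) < 1/α))
    calc 1/(α*(α-1)) * (B/Zπ - 1)
        = 1/α * (1/(α*(α-1)) * (α * (B/Zπ - 1))) := by
          field_simp <;> ring
      _ ≤ 1/α * (1/(α*(α-1)) * (Zα^α/Zπ^α - 1)) := h6
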